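/- arXiv:1606.09312 — 6 statements merged into one kernel-verified Lean document; each statement's English description precedes it below -/
import Mathlib

section
/- Let q : ℕ → ℤ be defined by q(1)=1, q(2)=2, q(3)=3, q(4)=4, q(5)=5, q(6)=7, q(7)=9, and q(n+1) = q(n-1) + q(n-2) for n ≥ 7. Then for all n ≥ 6, q(n+1) = q(n) + q(n-4). -/
theorem stmt_0 (q : ℕ → ℤ)
    (h1 : q 1 = 1) (h2 : q 2 = 2) (h3 : q 3 = 3) (h4 : q 4 = 4)
    (h5 : q 5 = 5) (h6 : q 6 = 7) (h7 : q 7 = 9)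
    (hrec : ∀ n ≥ 7, q (n + 1) = q (n - 1) + q (n - 2)) :
    ∀ n ≥ 6, q (n + 1) = q n + q (n - 4) := by
  intro n hn
  by_cases h9 : n ≥ 9
  · obtain ⟨m, rfl⟩ : ∃ m, n = m + 9 := ⟨n - 9, by omega⟩
    have e1 := hrec (m + 9) (by omega)
    have e2 := hrec (m + 8) (by omega)
    have e3 := hrec (m + 7) (by omega)
    have s1 : m + 9 - 1 = m + 8 := by omega
    have s2 : m + 9 - 2 = m + 7 := by omega
    have s3 : m + 8 - 1 = m + 7 := by omega
    have s4 : m + 8 - 2 = m + 6 := by omega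
    have s5 : m + 7 - 1 = m + 6 := by omega
    have s6 : m + 7 - 2 = m + 5 := by omega
    have s7 : m + 9 - 4 = m + 5 := by omega
    rw [s1, s2] at e1
    rw [s3, s4] at e2
    rw [s5, s6] at e3
    rw [s7]
    have : m + 8 + 1 = m + 9 := by omega
    rw [this] at e2
    have : m + 7 + 1 = m + 8 := by omega
    rw [this] at e3
    linarith
  · interval_cases n
    · simpa [h6, h2, h7] using rfl
    · have e := hrec 7 (by omega)
      norm_num [h5, h6, h7, h3] at e ⊢
      linarith
    · have e1 := hrec 7 (by omega)
      have e2 := hrec 8 (by omega)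
      norm_num [h4, h5, h6, h7] at e1 e2 ⊢
      linarith
end

section
/- Let q : ℕ → ℤ be the Fibonacci Quilt sequence (q(1)=1, q(2)=2, q(3)=3, q(4)=4, q(5)=5, q(6)=7, q(7)=9, q(n+1)=q(n-1)+q(n-2) for n ≥ 7). Then for all n ≥ 1, ∑_{i=1}^{n} q(i) = q(n+5) - 6. -/
theorem stmt_1 (q : ℕ → ℤ)
    (h1 : q 1 = 1) (h2 : q 2 = 2) (h3 : q 3 = 3) (h4 : q 4 = 4)
    (h5 : q 5 = 5) (h6 : q 6 = 7) (h7 : q 7 = 9)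
    (hrec : ∀ n ≥ 7, q (n + 1) = q (n - 1) + q (n - 2)) :
    ∀ n ≥ 1, ∑ i ∈ Finset.Icc 1 n, q i = q (n + 5) - 6 := by
  have hr : ∀ m, 5 ≤ m → q (m + 3) = q (m + 1) + q m := by
    intro m hm
    have h := hrec (m + 2) (by omega)
    have e1 : m + 2 + 1 = m + 3 := by ring
    have e2 : m + 2 - 1 = m + 1 := by omega
    have e3 : m + 2 - 2 = m := by omega
    rw [e1, e2, e3] at h
    exact h
  have key : ∀ n, 1 ≤ n → q (n + 6) = q (n + 5) + q (n + 1) := by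
    intro n hn
    have hq8 := hr 5 (by omega)
    have hq9 := hr 6 (by omega)
    norm_num at hq8 hq9
    rcases lt_or_ge n 4 with h | h
    · interval_cases n <;> norm_num <;> linarith
    · have e1 : q (n + 6) = q (n + 4) + q (n + 3) := by
        rw [show n + 6 = n + 3 + 3 by ring, show n + 4 = n + 3 + 1 by ring]
        exact hr (n + 3) (by omega)
      have e2 : q (n + 5) = q (n + 3) + q (n + 2) := by
        rw [show n + 5 = n + 2 + 3 by ring, show n + 3 = n + 2 + 1 by ring]
        exact hr (n + 2) (by omega)
      have e3 : q (n + 4) = q (n + 2) + q (n + 1) := by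
        rw [show n + 4 = n + 1 + 3 by ring, show n + 2 = n + 1 + 1 by ring]
        exact hr (n + 1) (by omega)
      linarith
  intro n hn
  induction n with
  | zero => omega
  | succ k ih =>
    rcases Nat.eq_or_lt_of_le hn with h | h
    · simp [← h, h1, h6]
    · have hk : 1 ≤ k := by omega
      rw [Finset.sum_Icc_succ_top (by omega), ih hk]
      have := key k hk
      have e : k + 1 + 5 = k + 6 := by ring
      rw [e, this]
      ring
end

section
/- Let q be the Fibonacci Quilt sequence. For all n ≥ 10, q(n) + q(n-3) = q(n+1) + q(n-8). -/
theorem aux_quilt (q : ℕ → ℤ)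
    (h2 : q 2 = 2) (h3 : q 3 = 3) (h4 : q 4 = 4)
    (h5 : q 5 = 5) (h6 : q 6 = 7) (h7 : q 7 = 9)
    (hrec : ∀ n ≥ 7, q (n + 1) = q (n - 1) + q (n - 2)) :
    ∀ m ≥ 6, q (m + 1) = q m + q (m - 4) := by
  intro m hm
  rcases Nat.lt_or_ge m 9 with h | h
  · interval_cases m
    · norm_num; linarith [h7, h6, h2]
    · have h8 := hrec 7 (by norm_num)
      norm_num at h8 ⊢; linarith
    · have h8 := hrec 7 (by norm_num)
      have h9 := hrec 8 (by norm_num)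
      norm_num at h8 h9 ⊢; linarith
  · have A := hrec m (by omega)
    have B := hrec (m - 1) (by omega)
    have C := hrec (m - 2) (by omega)
    have e1 : m - 1 + 1 = m := by omega
    have e2 : m - 1 - 1 = m - 2 := by omega
    have e3 : m - 1 - 2 = m - 3 := by omega
    have e4 : m - 2 + 1 = m - 1 := by omega
    have e5 : m - 2 - 1 = m - 3 := by omega
    have e6 : m - 2 - 2 = m - 4 := by omega
    rw [e1, e2, e3] at B
    rw [e4, e5, e6] at C
    linarith

theorem stmt_4 (q : ℕ → ℤ)
    (h1 : q 1 = 1) (h2 : q 2 = 2) (h3 : q 3 = 3) (h4 : q 4 = 4)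
    (h5 : q 5 = 5) (h6 : q 6 = 7) (h7 : q 7 = 9)
    (hrec : ∀ n ≥ 7, q (n + 1) = q (n - 1) + q (n - 2)) :
    ∀ n ≥ 10, q n + q (n - 3) = q (n + 1) + q (n - 8) := by
  intro n hn
  have P1 := aux_quilt q h2 h3 h4 h5 h6 h7 hrec n (by omega)
  have P2 := aux_quilt q h2 h3 h4 h5 h6 h7 hrec (n - 4) (by omega)
  have e1 : n - 4 + 1 = n - 3 := by omega
  have e2 : n - 4 - 4 = n - 8 := by omega
  rw [e1, e2] at P2
  linarith
end

section
/- Let q be the Fibonacci Quilt sequence. For all k ≥ 0 and ℓ ≥ 1 + 5k, we have q(ℓ) + q(ℓ-5) + q(ℓ-10) + ⋯ + q(ℓ-5k) < q(ℓ+1). -/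
theorem stmt_5 (q : ℕ → ℤ)
    (h1 : q 1 = 1) (h2 : q 2 = 2) (h3 : q 3 = 3) (h4 : q 4 = 4)
    (h5 : q 5 = 5) (h6 : q 6 = 7) (h7 : q 7 = 9)
    (hrec : ∀ n ≥ 7, q (n + 1) = q (n - 1) + q (n - 2)) :
    ∀ k : ℕ, ∀ ℓ : ℕ, ℓ ≥ 1 + 5 * k →
      ∑ i ∈ Finset.range (k + 1), q (ℓ - 5 * i) < q (ℓ + 1) := by
  have h8 : q 8 = 12 := by have := hrec 7 (by norm_num); norm_num at this; omega
  have h9 : q 9 = 16 := by have := hrec 8 (by norm_num); norm_num at this; omega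
  have id6 : ∀ n, 6 ≤ n → q (n + 1) = q n + q (n - 4) := by
    intro n hn
    match n, hn with
    | 6, _ => show q 7 = q 6 + q 2; rw [h7, h6, h2]; ring
    | 7, _ => show q 8 = q 7 + q 3; rw [h8, h7, h3]; ring
    | 8, _ => show q 9 = q 8 + q 4; rw [h9, h8, h4]; ring
    | (m + 9), _ =>
      have e1 : q (m + 10) = q (m + 8) + q (m + 7) := hrec (m + 9) (by omega)
      have e2 : q (m + 9) = q (m + 7) + q (m + 6) := hrec (m + 8) (by omega)
      have e3 : q (m + 8) = q (m + 6) + q (m + 5) := hrec (m + 7) (by omega)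
      show q (m + 10) = q (m + 9) + q (m + 5)
      linarith
  have pos : ∀ n, 1 ≤ n → 0 < q n := by
    intro n
    induction n using Nat.strong_induction_on with
    | _ n ih =>
      intro hn
      match n, hn with
      | 1, _ => rw [h1]; norm_num
      | 2, _ => rw [h2]; norm_num
      | 3, _ => rw [h3]; norm_num
      | 4, _ => rw [h4]; norm_num
      | 5, _ => rw [h5]; norm_num
      | 6, _ => rw [h6]; norm_num
      | 7, _ => rw [h7]; norm_num
      | (m + 8), _ =>
        have e : q (m + 8) = q (m + 6) + q (m + 5) := hrec (m + 7) (by omega)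
        have p1 := ih (m + 6) (by omega) (by omega)
        have p2 := ih (m + 5) (by omega) (by omega)
        linarith
  have mono : ∀ n, 1 ≤ n → q n < q (n + 1) := by
    intro n hn
    match n, hn with
    | 1, _ => rw [h1, h2]; norm_num
    | 2, _ => rw [h2, h3]; norm_num
    | 3, _ => rw [h3, h4]; norm_num
    | 4, _ => rw [h4, h5]; norm_num
    | 5, _ => rw [h5, h6]; norm_num
    | (m + 6), _ =>
      have e : q (m + 6 + 1) = q (m + 6) + q (m + 2) := id6 (m + 6) (by omega)
      have p := pos (m + 2) (by omega)
      linarith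
  intro k
  induction k with
  | zero =>
    intro ℓ hℓ
    simpa using mono ℓ (by omega)
  | succ k ih =>
    intro ℓ hℓ
    have hsplit : ∑ i ∈ Finset.range (k + 1 + 1), q (ℓ - 5 * i)
        = (∑ i ∈ Finset.range (k + 1), q (ℓ - 5 * (i + 1))) + q (ℓ - 5 * 0) :=
      Finset.sum_range_succ' _ _
    have hcong : ∑ i ∈ Finset.range (k + 1), q (ℓ - 5 * (i + 1))
        = ∑ i ∈ Finset.range (k + 1), q ((ℓ - 5) - 5 * i) := by
      apply Finset.sum_congr rfl
      intro i _
      congr 1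
      omega
    have hih := ih (ℓ - 5) (by omega)
    have heq : ℓ - 5 + 1 = ℓ - 4 := by omega
    rw [heq] at hih
    have hid : q (ℓ + 1) = q ℓ + q (ℓ - 4) := id6 ℓ (by omega)
    have hℓ0 : ℓ - 5 * 0 = ℓ := by omega
    rw [hsplit, hcong, hℓ0]
    linarith
end

section
/- Let r be the unique positive real root of y^{s+1} - y^s - b = 0, where s, b ≥ 1 are integers. Then r strictly exceeds the absolute value of every other complex root of this polynomial. -/
private lemma mono_aux (s : ℕ) {a c : ℝ} (ha : 1 ≤ a) (hac : a < c) :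
    a ^ s * (a - 1) < c ^ s * (c - 1) := by
  rcases eq_or_lt_of_le ha with h | h
  · rw [← h]
    simp only [one_pow]
    have hc : 0 < c ^ s := pow_pos (by linarith) s
    nlinarith
  · have h1 : a ^ s ≤ c ^ s := pow_le_pow_left₀ (by linarith) hac.le s
    have h2 : 0 < a ^ s := pow_pos (by linarith) s
    have : a - 1 < c - 1 := by linarith
    calc a ^ s * (a - 1) < c ^ s * (c - 1) := by nlinarith

theorem stmt_8 (s b : ℕ) (hs : 1 ≤ s) (hb : 1 ≤ b) (r : ℝ)
    (hr : 0 < r) (hroot : r ^ (s + 1) - r ^ s - (b : ℝ) = 0) :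
    ∀ z : ℂ, z ^ (s + 1) - z ^ s - (b : ℂ) = 0 → z ≠ (r : ℂ) → ‖z‖ < r := by
  intro z hz hne
  have hb' : (1 : ℝ) ≤ b := by exact_mod_cast hb
  have key : r ^ s * (r - 1) = b := by
    rw [mul_sub, mul_one, ← pow_succ]; linarith
  have hrs : 0 < r ^ s := pow_pos hr s
  have hr1 : 1 < r := by
    by_contra h
    push_neg at h
    have : r ^ s * (r - 1) ≤ 0 :=
      mul_nonpos_of_nonneg_of_nonpos hrs.le (by linarith)
    linarith
  have hzkey : z ^ s * (z - 1) = (b : ℂ) := by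
    rw [mul_sub, mul_one, ← pow_succ]; linear_combination hz
  set t := ‖z‖ with ht
  have habs : t ^ s * ‖z - 1‖ = b := by
    rw [← norm_pow, ← norm_mul, hzkey]
    simp
  have hsub : t - 1 ≤ ‖z - 1‖ := by
    have := norm_sub_norm_le z 1
    simpa [ht] using this
  rcases le_or_gt t 1 with hle | ht1
  · linarith
  · have hts : 0 < t ^ s := pow_pos (by linarith) s
    have hbound : t ^ s * (t - 1) ≤ b := by
      have : t ^ s * (t - 1) ≤ t ^ s * ‖z - 1‖ :=
        mul_le_mul_of_nonneg_left hsub hts.le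
      linarith
    by_contra hcon
    push_neg at hcon
    rcases eq_or_lt_of_le hcon with heq | hlt
    · -- t = r : equality case, z must be real = r
      have heq' : t = r := heq.symm
      have hb_eq : t ^ s * (t - 1) = b := by rw [heq']; exact key
      have habs1 : ‖z - 1‖ = t - 1 := by
        have h0 : t ^ s * ‖z - 1‖ = t ^ s * (t - 1) := by
          rw [habs, hb_eq]
        exact mul_left_cancel₀ (ne_of_gt hts) h0
      have hn1 : Complex.normSq (z - 1) = (t - 1) ^ 2 := by
        rw [← Complex.sq_norm, habs1]
      have hn2 : z.re ^ 2 + z.im ^ 2 = t ^ 2 := by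
        rw [ht, Complex.sq_norm, Complex.normSq_apply]; ring
      have hn1' : (z.re - 1) ^ 2 + z.im ^ 2 = (t - 1) ^ 2 := by
        rw [← hn1, Complex.normSq_apply]
        simp [Complex.sub_re, Complex.sub_im]
        ring
      have hre : z.re = t := by nlinarith
      have him : z.im = 0 := by nlinarith
      apply hne
      apply Complex.ext
      · simp [hre, heq']
      · simp [him]
    · -- r < t
      have := mono_aux s hr1.le hlt
      linarith
end

section
/- Let g : ℕ → ℤ satisfy g(k) = k + 1 for 1 ≤ k ≤ 5 and g(n) = g(n-1) + g(n-5) for n ≥ 6. Then g(n) ≥ 2^{⌊(n-1)/5⌋} for all n ≥ 1. -/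
theorem stmt_12 (g : ℕ → ℤ)
    (hinit : ∀ k, 1 ≤ k → k ≤ 5 → g k = k + 1)
    (hrec : ∀ n ≥ 6, g n = g (n - 1) + g (n - 5)) :
    ∀ n ≥ 1, g n ≥ 2 ^ ((n - 1) / 5) := by
  intro n
  induction n using Nat.strong_induction_on with
  | _ n ih =>
    intro hn
    by_cases h5 : n ≤ 5
    · rw [hinit n hn h5]
      have : (n - 1) / 5 = 0 := Nat.div_eq_of_lt (by omega)
      rw [this]
      push_cast
      omega
    · have h6 : 6 ≤ n := by omega
      rw [hrec n h6]
      have h1 : g (n - 1) ≥ 2 ^ ((n - 1 - 1) / 5) := ih (n - 1) (by omega) (by omega)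
      have h2 : g (n - 5) ≥ 2 ^ ((n - 5 - 1) / 5) := ih (n - 5) (by omega) (by omega)
      have e1 : (n - 1) / 5 = (n - 5 - 1) / 5 + 1 := by omega
      have e2 : (n - 5 - 1) / 5 ≤ (n - 1 - 1) / 5 := by omega
      have hle : (2 : ℤ) ^ ((n - 5 - 1) / 5) ≤ 2 ^ ((n - 1 - 1) / 5) :=
        pow_le_pow_right₀ (by norm_num) e2
      rw [e1, pow_succ]
      linarith
end
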